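/- arXiv:0810.5027 — 5 statements merged into one kernel-verified Lean document; each statement's English description precedes it below -/
import Mathlib

section
/- Let T ≥ 0 and let u be a continuous nonnegative function on the closure of B₁ ∩ {x ∈ ℝ³ : x₃ > −T}, where B₁ is the open unit ball of ℝ³ centered at 0. Then for every a > 0 there exists a point x in B₁ with x₃ ≥ −T such that, setting σ = (1 − |x|)/2, one has u(x) ≥ 2^{−a} · max{u(z) : z ∈ closed ball B(x,σ), z₃ ≥ −T} and σ^a u(x) ≥ 2^{−a} u(0). -/
open Metric Set MeasureTheory

noncomputable section

abbrev E3 := EuclideanSpace ℝ (Fin 3)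

/-- The Euclidean Laplacian on ℝ³. -/
noncomputable def lap (u : E3 → ℝ) (x : E3) : ℝ :=
  ∑ i : Fin 3, fderiv ℝ (fun y => fderiv ℝ u y (EuclideanSpace.single i 1)) x
    (EuclideanSpace.single i 1)

/-- The third standard basis vector of ℝ³. -/
noncomputable def e3 : E3 := EuclideanSpace.single 2 1

lemma mem_closure_aux (T : ℝ) (z : E3) (hz : ‖z‖ < 1) (hz2 : -T ≤ z 2) :
    z ∈ closure (ball (0 : E3) 1 ∩ {x : E3 | -T < x 2}) := by
  have hcont : Filter.Tendsto (fun t : ℝ => z + t • e3) (nhdsWithin 0 (Ioi 0)) (nhds z) := by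
    have : Filter.Tendsto (fun t : ℝ => z + t • e3) (nhds 0) (nhds (z + (0:ℝ) • e3)) := by
      exact (continuous_const.add (continuous_id.smul continuous_const)).tendsto 0
    simpa using this.mono_left nhdsWithin_le_nhds
  refine mem_closure_of_tendsto hcont ?_
  have hmem : Ioo (0:ℝ) (1 - ‖z‖) ∈ nhdsWithin (0:ℝ) (Ioi 0) :=
    Ioo_mem_nhdsGT_of_mem ⟨le_refl 0, by linarith⟩
  filter_upwards [hmem] with t ht
  have he3 : ‖e3‖ = 1 := by simp [e3]
  constructor
  · rw [mem_ball, dist_zero_right]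
    calc ‖z + t • e3‖ ≤ ‖z‖ + ‖t • e3‖ := norm_add_le _ _
    _ = ‖z‖ + |t| * 1 := by rw [norm_smul, he3, Real.norm_eq_abs]
    _ = ‖z‖ + t := by rw [abs_of_pos ht.1]; ring
    _ < 1 := by linarith [ht.2]
  · have : (z + t • e3) 2 = z 2 + t := by
      simp [e3, EuclideanSpace.single_apply]
    simp only [Set.mem_setOf_eq, this]
    linarith [ht.1]

/-- Lemma f6lem4 (the Calculus selection lemma). -/
theorem stmt3 (T : ℝ) (hT : 0 ≤ T) (u : E3 → ℝ)
    (hcont : ContinuousOn u (closure (ball (0 : E3) 1 ∩ {x : E3 | -T < x 2})))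
    (hnonneg : ∀ x ∈ closure (ball (0 : E3) 1 ∩ {x : E3 | -T < x 2}), 0 ≤ u x) :
    ∀ a : ℝ, 0 < a →
      ∃ x : E3, ‖x‖ < 1 ∧ -T ≤ x 2 ∧
        (∀ z ∈ closedBall x ((1 - ‖x‖) / 2), -T ≤ z 2 → (2 : ℝ) ^ (-a) * u z ≤ u x) ∧
        (2 : ℝ) ^ (-a) * u 0 ≤ ((1 - ‖x‖) / 2) ^ a * u x := by
  intro a ha
  set K := closure (ball (0 : E3) 1 ∩ {x : E3 | -T < x 2}) with hK
  have h0K : (0 : E3) ∈ K := mem_closure_aux T 0 (by simp) (by simpa using hT)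
  -- K is compact
  have hKcomp : IsCompact K := by
    apply Bornology.IsBounded.isCompact_closure
    exact (isBounded_ball.subset (inter_subset_left))
  -- K ⊆ closedBall 0 1
  have hKball : K ⊆ closedBall (0 : E3) 1 := by
    rw [hK]
    refine closure_minimal ?_ isClosed_closedBall
    exact inter_subset_left.trans ball_subset_closedBall
  -- K ⊆ {x | -T ≤ x 2}
  have hKT : K ⊆ {x : E3 | -T ≤ x 2} := by
    rw [hK]
    refine closure_minimal ?_ ?_
    · exact fun x hx => show -T ≤ x 2 from le_of_lt hx.2
    · exact isClosed_le continuous_const ((continuous_apply 2).comp (PiLp.continuous_ofLp 2 _))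
  -- the function f
  set f : E3 → ℝ := fun x => (1 - ‖x‖) ^ a * u x with hf
  have hfcont : ContinuousOn f K := by
    apply ContinuousOn.mul _ hcont
    apply Continuous.continuousOn
    exact (continuous_const.sub continuous_norm).rpow_const (fun x => Or.inr ha.le)
  obtain ⟨x₀, hx₀K, hmax⟩ := hKcomp.exists_isMaxOn ⟨0, h0K⟩ hfcont
  have hmax' : ∀ z ∈ K, f z ≤ f x₀ := fun z hz => hmax hz
  have hf0 : f 0 = u 0 := by simp [hf, Real.one_rpow]
  have hu0 : u 0 ≤ f x₀ := by rw [← hf0]; exact hmax' 0 h0K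
  have hu0nn : 0 ≤ u 0 := hnonneg 0 h0K
  by_cases hM : f x₀ ≤ 0
  · -- max is 0, take x = 0
    have hzeroK : ∀ z : E3, z ∈ closedBall (0:E3) (1/2) → -T ≤ z 2 → u z = 0 := by
      intro z hzc hzT
      have hznorm : ‖z‖ ≤ 1/2 := by simpa [dist_zero_right] using hzc
      have hzK : z ∈ K := mem_closure_aux T z (by linarith) hzT
      have h1 : f z ≤ 0 := le_trans (hmax' z hzK) hM
      have h2 : (0:ℝ) < (1 - ‖z‖) ^ a := Real.rpow_pos_of_pos (by linarith) a
      have h3 : 0 ≤ u z := hnonneg z hzK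
      simp only [hf] at h1
      nlinarith
    have hu00 : u 0 = 0 := hzeroK 0 (by simp) (by simpa using hT)
    refine ⟨0, by simp, by simpa using hT, ?_, ?_⟩
    · intro z hz hzT
      have : u z = 0 := hzeroK z (by simpa using hz) hzT
      rw [this, hu00, mul_zero]
    · rw [hu00, mul_zero, mul_zero]
  · push_neg at hM
    -- x₀ is in the open ball
    have hx₀ball : ‖x₀‖ ≤ 1 := by simpa [dist_zero_right] using hKball hx₀K
    have hux₀ : 0 ≤ u x₀ := hnonneg x₀ hx₀K
    have hbase : 0 < 1 - ‖x₀‖ := by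
      rcases lt_or_eq_of_le hx₀ball with h | h
      · linarith
      · exfalso
        have : f x₀ = 0 := by
          simp [hf, h, Real.zero_rpow (ne_of_gt ha)]
        linarith
    set σ : ℝ := (1 - ‖x₀‖) / 2 with hσ
    have hσpos : 0 < σ := by positivity
    have hσa : (0:ℝ) < σ ^ a := Real.rpow_pos_of_pos hσpos a
    have h2a : (0:ℝ) < (2:ℝ) ^ a := Real.rpow_pos_of_pos (by norm_num) a
    have h2na : (2:ℝ) ^ (-a) = ((2:ℝ) ^ a)⁻¹ := Real.rpow_neg (by norm_num) a
    have hfx₀ : f x₀ = 2 ^ a * σ ^ a * u x₀ := by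
      show (1 - ‖x₀‖) ^ a * u x₀ = _
      have h2σ : (1 - ‖x₀‖) = 2 * σ := by rw [hσ]; ring
      rw [h2σ, Real.mul_rpow (by norm_num) hσpos.le]
    refine ⟨x₀, by linarith, hKT hx₀K, ?_, ?_⟩
    · intro z hz hzT
      have hdz : ‖z - x₀‖ ≤ σ := by
        rw [mem_closedBall, dist_eq_norm] at hz
        exact hz
      have hznorm : ‖z‖ ≤ ‖x₀‖ + σ := by
        calc ‖z‖ = ‖(z - x₀) + x₀‖ := by rw [show z - x₀ + x₀ = z by abel]
        _ ≤ ‖z - x₀‖ + ‖x₀‖ := norm_add_le _ _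
        _ ≤ ‖x₀‖ + σ := by linarith
      have hzlt : ‖z‖ < 1 := by rw [hσ] at hznorm; linarith
      have hzK : z ∈ K := mem_closure_aux T z hzlt hzT
      have h1z : σ ≤ 1 - ‖z‖ := by rw [hσ] at hznorm ⊢; linarith
      have huz : 0 ≤ u z := hnonneg z hzK
      have hstep : σ ^ a * u z ≤ (1 - ‖z‖) ^ a * u z :=
        mul_le_mul_of_nonneg_right (Real.rpow_le_rpow hσpos.le h1z ha.le) huz
      have hstep2 : (1 - ‖z‖) ^ a * u z ≤ 2 ^ a * σ ^ a * u x₀ := by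
        rw [← hfx₀]; exact hmax' z hzK
      have : u z ≤ 2 ^ a * u x₀ := by
        have h := hstep.trans hstep2
        rw [mul_comm ((2:ℝ)^a) (σ^a), mul_assoc] at h
        exact le_of_mul_le_mul_left h hσa
      rw [h2na]
      rw [inv_mul_le_iff₀ h2a]
      linarith [this]
    · rw [h2na, inv_mul_le_iff₀ h2a]
      calc u 0 ≤ f x₀ := hu0
      _ = 2 ^ a * (σ ^ a * u x₀) := by rw [hfx₀]; ring
end
end

section
/- Let λ > 0, let U ⊂ ℝ³ be open, and let v be a C¹ function on U. Let y ∈ ℝ³ with y ≠ 0 and y₃ = 0 be such that y^λ := λ²y/|y|² ∈ U (note that (y^λ)₃ = 0). Then the Kelvin transform v^λ(z) = (λ/|z|) v(λ²z/|z|²) is differentiable at y and ∂(v^λ)/∂y₃ (y) = (λ/|y|)³ · ∂v/∂x₃ (y^λ). In particular, if c : ℝ³ → ℝ is such that ∂v/∂x₃(y^λ) = c(y^λ) v(y^λ)³, then ∂(v^λ)/∂y₃(y) = c(y^λ) v^λ(y)³. -/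
open Metric Set MeasureTheory

noncomputable section

/-- The normal derivative of the Kelvin transform on the flat boundary. -/
theorem stmt5 (lam : ℝ) (hlam : 0 < lam) (U : Set E3) (hU : IsOpen U)
    (v : E3 → ℝ) (hv : ContDiffOn ℝ 1 v U)
    (y : E3) (hy : y ≠ 0) (hy3 : y 2 = 0) (hyU : (lam ^ 2 / ‖y‖ ^ 2) • y ∈ U) :
    DifferentiableAt ℝ (fun z : E3 => (lam / ‖z‖) * v ((lam ^ 2 / ‖z‖ ^ 2) • z)) y ∧
    fderiv ℝ (fun z : E3 => (lam / ‖z‖) * v ((lam ^ 2 / ‖z‖ ^ 2) • z)) y e3 =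
      (lam / ‖y‖) ^ 3 * fderiv ℝ v ((lam ^ 2 / ‖y‖ ^ 2) • y) e3 ∧
    ∀ c : E3 → ℝ,
      fderiv ℝ v ((lam ^ 2 / ‖y‖ ^ 2) • y) e3 =
        c ((lam ^ 2 / ‖y‖ ^ 2) • y) * v ((lam ^ 2 / ‖y‖ ^ 2) • y) ^ 3 →
      fderiv ℝ (fun z : E3 => (lam / ‖z‖) * v ((lam ^ 2 / ‖z‖ ^ 2) • z)) y e3 =
        c ((lam ^ 2 / ‖y‖ ^ 2) • y) *
          ((lam / ‖y‖) * v ((lam ^ 2 / ‖y‖ ^ 2) • y)) ^ 3 := by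
  have hn : ‖y‖ ≠ 0 := norm_ne_zero_iff.mpr hy
  have hn2 : ‖y‖ ^ 2 ≠ 0 := pow_ne_zero 2 hn
  set p : E3 := (lam ^ 2 / ‖y‖ ^ 2) • y with hp
  -- inner product of y with e3 vanishes
  have hinner : (innerSL ℝ y) e3 = 0 := by
    simp [e3, EuclideanSpace.inner_single_right, hy3]
  -- derivative of the squared norm
  have hN : HasFDerivAt (fun z : E3 => ‖z‖ ^ 2) (2 • innerSL ℝ y) y :=
    (hasStrictFDerivAt_norm_sq y).hasFDerivAt
  -- derivative of z ↦ lam^2 / ‖z‖^2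
  have hinv : HasFDerivAt (fun z : E3 => (‖z‖ ^ 2)⁻¹)
      ((-((‖y‖ ^ 2) ^ 2)⁻¹) • (2 • innerSL ℝ y)) y :=
    (hasDerivAt_inv hn2).comp_hasFDerivAt y hN
  have hc : HasFDerivAt (fun z : E3 => lam ^ 2 / ‖z‖ ^ 2)
      ((lam ^ 2) • ((-((‖y‖ ^ 2) ^ 2)⁻¹) • (2 • innerSL ℝ y))) y := by
    simpa only [div_eq_mul_inv] using hinv.const_mul (lam ^ 2)
  -- derivative of the inversion map g
  have hg : HasFDerivAt (fun z : E3 => (lam ^ 2 / ‖z‖ ^ 2) • z)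
      ((lam ^ 2 / ‖y‖ ^ 2) • ContinuousLinearMap.id ℝ E3 +
        ((lam ^ 2) • ((-((‖y‖ ^ 2) ^ 2)⁻¹) • (2 • innerSL ℝ y))).smulRight y) y :=
    hc.smul (hasFDerivAt_id y)
  -- v is differentiable at p
  have hvd : DifferentiableAt ℝ v p :=
    ((hv.contDiffAt (hU.mem_nhds hyU)).differentiableAt one_ne_zero)
  have hv' : HasFDerivAt v (fderiv ℝ v p) p := hvd.hasFDerivAt
  have hcomp : HasFDerivAt (fun z : E3 => v ((lam ^ 2 / ‖z‖ ^ 2) • z))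
      ((fderiv ℝ v p).comp ((lam ^ 2 / ‖y‖ ^ 2) • ContinuousLinearMap.id ℝ E3 +
        ((lam ^ 2) • ((-((‖y‖ ^ 2) ^ 2)⁻¹) • (2 • innerSL ℝ y))).smulRight y)) y :=
    hv'.comp y hg
  -- derivative of z ↦ lam / ‖z‖
  have hsq : ∀ z : E3, ‖z‖ = Real.sqrt (‖z‖ ^ 2) := fun z =>
    (Real.sqrt_sq (norm_nonneg z)).symm
  have hsqy : Real.sqrt (‖y‖ ^ 2) ≠ 0 := by rw [← hsq y]; exact hn
  have hsqrt : HasFDerivAt (fun z : E3 => Real.sqrt (‖z‖ ^ 2))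
      ((1 / (2 * Real.sqrt (‖y‖ ^ 2))) • (2 • innerSL ℝ y)) y := hN.sqrt hn2
  have hinvs : HasFDerivAt (fun z : E3 => (Real.sqrt (‖z‖ ^ 2))⁻¹)
      ((-(Real.sqrt (‖y‖ ^ 2) ^ 2)⁻¹) •
        ((1 / (2 * Real.sqrt (‖y‖ ^ 2))) • (2 • innerSL ℝ y))) y :=
    (hasDerivAt_inv hsqy).comp_hasFDerivAt y hsqrt
  have hs : HasFDerivAt (fun z : E3 => lam / ‖z‖)
      (lam • ((-(Real.sqrt (‖y‖ ^ 2) ^ 2)⁻¹) •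
        ((1 / (2 * Real.sqrt (‖y‖ ^ 2))) • (2 • innerSL ℝ y)))) y := by
    have : (fun z : E3 => lam / ‖z‖) = fun z : E3 => lam * (Real.sqrt (‖z‖ ^ 2))⁻¹ := by
      funext z; rw [← hsq z, div_eq_mul_inv]
    rw [this]
    exact hinvs.const_mul lam
  -- the full derivative
  have hf := hs.mul hcomp
  refine ⟨hf.differentiableAt, ?_, ?_⟩
  · have hfd : fderiv ℝ (fun z : E3 => (lam / ‖z‖) * v ((lam ^ 2 / ‖z‖ ^ 2) • z)) y = _ :=
      hf.fderiv
    rw [hfd]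
    simp only [ContinuousLinearMap.add_apply, ContinuousLinearMap.smul_apply,
      ContinuousLinearMap.comp_apply, ContinuousLinearMap.smulRight_apply,
      ContinuousLinearMap.id_apply, hinner, smul_zero, zero_smul, add_zero,
      smul_eq_mul, mul_zero]
    rw [(fderiv ℝ v p).map_smul, smul_eq_mul]
    field_simp
  · intro c hc'
    have hfd : fderiv ℝ (fun z : E3 => (lam / ‖z‖) * v ((lam ^ 2 / ‖z‖ ^ 2) • z)) y = _ :=
      hf.fderiv
    rw [hfd]
    simp only [ContinuousLinearMap.add_apply, ContinuousLinearMap.smul_apply,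
      ContinuousLinearMap.comp_apply, ContinuousLinearMap.smulRight_apply,
      ContinuousLinearMap.id_apply, hinner, smul_zero, zero_smul, add_zero,
      smul_eq_mul, mul_zero]
    rw [(fderiv ℝ v p).map_smul, smul_eq_mul, hc']
    field_simp
end
end

section
/- Let c₀ ≥ 0, let U₁(y) = (1 + |y − c₀e₃|²)^{−1/2} on ℝ³ (where e₃ = (0,0,1)), and for λ > 0 let U₁^λ(y) = (λ/|y|) U₁(λ²y/|y|²) be its Kelvin transform. Then: (i) for every λ with 0 < λ < (1 + c₀²)^{1/2} and every y ∈ ℝ³ with |y| > λ, U₁(y) > U₁^λ(y); (ii) for every λ > (1 + c₀²)^{1/2} and every y ∈ ℝ³ with |y| > λ, U₁(y) < U₁^λ(y). -/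
open Metric Set MeasureTheory

noncomputable section

lemma norm_e3 : ‖(e3 : E3)‖ = 1 := by
  simp [e3, EuclideanSpace.norm_single]

lemma key (c lam : ℝ) (y : E3) (hr : ‖y‖ ≠ 0) :
    (1 + ‖(lam ^ 2 / ‖y‖ ^ 2) • y - c • e3‖ ^ 2)
      - (lam / ‖y‖) ^ 2 * (1 + ‖y - c • e3‖ ^ 2)
      = (1 + c ^ 2 - lam ^ 2) * (1 - lam ^ 2 / ‖y‖ ^ 2) := by
  have h1 : ‖(lam ^ 2 / ‖y‖ ^ 2) • y - c • e3‖ ^ 2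
      = ‖(lam ^ 2 / ‖y‖ ^ 2) • y‖ ^ 2 - 2 * inner ℝ ((lam ^ 2 / ‖y‖ ^ 2) • y) (c • e3) + ‖c • e3‖ ^ 2 :=
    @norm_sub_sq_real E3 _ _ _ _
  have h2 : ‖y - c • e3‖ ^ 2 = ‖y‖ ^ 2 - 2 * inner ℝ y (c • e3) + ‖c • e3‖ ^ 2 :=
    @norm_sub_sq_real E3 _ _ _ _
  rw [h1, h2, real_inner_smul_left]
  have h3 : ‖(lam ^ 2 / ‖y‖ ^ 2) • y‖ ^ 2 = (lam ^ 2 / ‖y‖ ^ 2) ^ 2 * ‖y‖ ^ 2 := by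
    rw [norm_smul, Real.norm_eq_abs, mul_pow, sq_abs]
  have h4 : ‖c • e3‖ ^ 2 = c ^ 2 := by
    rw [norm_smul, norm_e3, mul_one, Real.norm_eq_abs, sq_abs]
  rw [h3, h4]
  field_simp
  ring

/-- Comparison of `U₁` with its Kelvin transform `U₁^λ`, critical radius `√(1+c₀²)`. -/
theorem stmt8 (c₀ : ℝ) (hc₀ : 0 ≤ c₀) (U₁ : E3 → ℝ)
    (hUdef : ∀ y : E3, U₁ y = (Real.sqrt (1 + ‖y - c₀ • e3‖ ^ 2))⁻¹) :
    (∀ lam : ℝ, 0 < lam → lam < Real.sqrt (1 + c₀ ^ 2) → ∀ y : E3, lam < ‖y‖ →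
      (lam / ‖y‖) * U₁ ((lam ^ 2 / ‖y‖ ^ 2) • y) < U₁ y) ∧
    (∀ lam : ℝ, Real.sqrt (1 + c₀ ^ 2) < lam → ∀ y : E3, lam < ‖y‖ →
      U₁ y < (lam / ‖y‖) * U₁ ((lam ^ 2 / ‖y‖ ^ 2) • y)) := by
  constructor
  · intro lam hlam hlt y hy
    have hr : (0:ℝ) < ‖y‖ := lt_trans hlam hy
    have hrne : ‖y‖ ≠ 0 := ne_of_gt hr
    set A := 1 + ‖y - c₀ • e3‖ ^ 2 with hA
    set B := 1 + ‖(lam ^ 2 / ‖y‖ ^ 2) • y - c₀ • e3‖ ^ 2 with hB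
    have hApos : (0:ℝ) < A := by positivity
    have hBpos : (0:ℝ) < B := by positivity
    have hsA : (0:ℝ) < Real.sqrt A := Real.sqrt_pos.mpr hApos
    have hsB : (0:ℝ) < Real.sqrt B := Real.sqrt_pos.mpr hBpos
    have hlam2 : lam ^ 2 < 1 + c₀ ^ 2 := (Real.lt_sqrt hlam.le).mp hlt
    have hfrac : lam ^ 2 / ‖y‖ ^ 2 < 1 := by
      rw [div_lt_one (by positivity)]
      exact pow_lt_pow_left₀ hy hlam.le (by norm_num)
    have hkey := key c₀ lam y hrne
    have hBA : (lam / ‖y‖) ^ 2 * A < B := by nlinarith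
    rw [hUdef, hUdef]
    have h : lam / ‖y‖ * Real.sqrt A < Real.sqrt B := by
      rw [Real.lt_sqrt (by positivity)]
      rw [mul_pow, Real.sq_sqrt hApos.le]
      exact hBA
    rw [inv_eq_one_div, inv_eq_one_div, mul_one_div, div_lt_div_iff₀ hsB hsA, one_mul]
    exact h
  · intro lam hlt y hy
    have hlam : (0:ℝ) < lam := lt_of_lt_of_le (Real.sqrt_pos.mpr (by positivity)) hlt.le
    have hr : (0:ℝ) < ‖y‖ := lt_trans hlam hy
    have hrne : ‖y‖ ≠ 0 := ne_of_gt hr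
    set A := 1 + ‖y - c₀ • e3‖ ^ 2 with hA
    set B := 1 + ‖(lam ^ 2 / ‖y‖ ^ 2) • y - c₀ • e3‖ ^ 2 with hB
    have hApos : (0:ℝ) < A := by positivity
    have hBpos : (0:ℝ) < B := by positivity
    have hsA : (0:ℝ) < Real.sqrt A := Real.sqrt_pos.mpr hApos
    have hsB : (0:ℝ) < Real.sqrt B := Real.sqrt_pos.mpr hBpos
    have hlam2 : 1 + c₀ ^ 2 < lam ^ 2 := (Real.sqrt_lt' hlam).mp hlt
    have hfrac : lam ^ 2 / ‖y‖ ^ 2 < 1 := by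
      rw [div_lt_one (by positivity)]
      exact pow_lt_pow_left₀ hy hlam.le (by norm_num)
    have hkey := key c₀ lam y hrne
    have hBA : B < (lam / ‖y‖) ^ 2 * A := by nlinarith
    rw [hUdef, hUdef]
    have h : Real.sqrt B < lam / ‖y‖ * Real.sqrt A := by
      rw [Real.sqrt_lt' (by positivity)]
      rw [mul_pow, Real.sq_sqrt hApos.le]
      exact hBA
    rw [inv_eq_one_div, inv_eq_one_div, mul_one_div, div_lt_div_iff₀ hsA hsB, one_mul]
    exact h
end
end

section
/- Let A > 0 and define φ(y) = 1 − A^{1/4}|y + |y|e₃|^{−1/4} for y ∈ ℝ³ with y₃ > 0, where e₃ = (0,0,1). Then for every y with y₃ > 0 and φ(y) > 0, the function φ² is twice differentiable at y and Δ(φ²)(y) ≥ (1/50) A^{1/2} |y|^{−5/2}. -/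
open Metric Set MeasureTheory

noncomputable section

open scoped RealInnerProductSpace

namespace Stmt12Aux

def wf (z : E3) : ℝ := 2*‖z‖^2 + 2*(‖z‖*(z 2))

def Wd (z : E3) : E3 →L[ℝ] ℝ :=
  (4 + 2*(z 2)/‖z‖) • innerSL ℝ z + (2*‖z‖) • EuclideanSpace.proj (2 : Fin 3)

def q1 (c t : ℝ) : ℝ := c/4 * (1 - c * t ^ (-(1/8):ℝ)) * t ^ (-(9/8):ℝ)

def q2 (c t : ℝ) : ℝ := c/4 * (1 - c * t ^ (-(1/8):ℝ)) * (-(9/8) * t ^ (-(17/8):ℝ))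
  + c/4 * (-(c * (-(1/8) * t ^ (-(9/8):ℝ)))) * t ^ (-(9/8):ℝ)

def Ff (c : ℝ) (z : E3) : ℝ := (1 - c * wf z ^ (-(1/8):ℝ))^2

def Ei (i : Fin 3) : ℝ := if (2:Fin 3) = i then 1 else 0

def Pf (c : ℝ) (i : Fin 3) (z : E3) : ℝ :=
  q1 c (wf z) * ((4 + 2 * (z 2 * ‖z‖⁻¹)) * z i + 2 * ‖z‖ * Ei i)

lemma norm_pos_of (z : E3) (hz : 0 < z 2) : 0 < ‖z‖ := by
  refine norm_pos_iff.mpr fun h => ?_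
  rw [h] at hz; simp at hz

lemma wf_pos (z : E3) (hz : 0 < z 2) : 0 < wf z := by
  have h := norm_pos_of z hz
  have h2 : 0 < 2*(‖z‖*(z 2)) := by positivity
  have h1 : 0 < 2*‖z‖^2 := by positivity
  unfold wf; linarith

lemma norm_sq_eq_wf (z : E3) : ‖z + ‖z‖ • e3‖^2 = wf z := by
  rw [@norm_add_sq_real]
  have h1 : ⟪z, ‖z‖ • e3⟫ = ‖z‖ * (z 2) := by
    rw [real_inner_smul_right]
    congr 1
    have : ⟪z, (EuclideanSpace.single 2 (1:ℝ))⟫ = (1:ℝ) * (starRingEnd ℝ) (z 2) :=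
      EuclideanSpace.inner_single_right 2 1 z
    simpa [e3] using this
  have h2 : ‖‖z‖ • e3‖ = ‖z‖ := by
    simp [e3, norm_smul, EuclideanSpace.norm_single]
  rw [h1, h2]; unfold wf; ring

lemma hasFDerivAt_norm (z : E3) (hz : 0 < ‖z‖) :
    HasFDerivAt (fun z : E3 => ‖z‖) ((‖z‖)⁻¹ • innerSL ℝ z) z := by
  have h1 : HasFDerivAt (fun z : E3 => ‖z‖^2) (2 • innerSL ℝ z) z :=
    (hasStrictFDerivAt_norm_sq z).hasFDerivAt
  have hne : ‖z‖^2 ≠ 0 := by positivity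
  have h2 := (Real.hasDerivAt_sqrt hne).comp_hasFDerivAt z h1
  have hfun : (Real.sqrt ∘ fun z : E3 => ‖z‖^2) = fun z : E3 => ‖z‖ := by
    funext u; simp [Function.comp, Real.sqrt_sq (norm_nonneg u)]
  rw [hfun] at h2
  refine h2.congr_fderiv ?_
  ext v
  have hs : Real.sqrt (‖z‖^2) = ‖z‖ := Real.sqrt_sq (norm_nonneg z)
  simp only [hs, ContinuousLinearMap.coe_smul', Pi.smul_apply, smul_eq_mul,
    ContinuousLinearMap.smul_apply, innerSL_apply_apply]
  field_simp
  ring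

lemma hasFDerivAt_coord (z : E3) :
    HasFDerivAt (fun z : E3 => z 2) (EuclideanSpace.proj (2 : Fin 3) : E3 →L[ℝ] ℝ) z :=
  (EuclideanSpace.proj (2 : Fin 3) : E3 →L[ℝ] ℝ).hasFDerivAt

lemma hasFDerivAt_wf (z : E3) (hz : 0 < ‖z‖) : HasFDerivAt wf (Wd z) z := by
  have h1 : HasFDerivAt (fun z : E3 => ‖z‖^2) (2 • innerSL ℝ z) z :=
    (hasStrictFDerivAt_norm_sq z).hasFDerivAt
  have h := ((h1.const_mul (2:ℝ))).add
    (((hasFDerivAt_norm z hz).mul (hasFDerivAt_coord z)).const_mul (2:ℝ))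
  refine h.congr_fderiv ?_
  ext v
  simp only [Wd, ContinuousLinearMap.add_apply, ContinuousLinearMap.coe_smul', Pi.smul_apply,
    innerSL_apply_apply, smul_eq_mul, PiLp.proj_apply, ContinuousLinearMap.smul_apply]
  field_simp
  ring

lemma hasDerivAt_outer (c t : ℝ) (ht : 0 < t) :
    HasDerivAt (fun t => (1 - c * t ^ (-(1/8):ℝ))^2) (q1 c t) t := by
  have h0 : HasDerivAt (fun t : ℝ => t ^ (-(1/8):ℝ)) (-(1/8) * t ^ ((-(1/8) - 1):ℝ)) t :=
    Real.hasDerivAt_rpow_const (Or.inl ht.ne')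
  have h1 := ((h0.const_mul c).const_sub 1).pow 2
  refine h1.congr_deriv ?_
  have he : ((-(1/8) - 1):ℝ) = -(9/8) := by norm_num
  rw [he, q1]
  ring

lemma hasDerivAt_q1 (c t : ℝ) (ht : 0 < t) : HasDerivAt (q1 c) (q2 c t) t := by
  have h0 : HasDerivAt (fun t : ℝ => t ^ (-(1/8):ℝ)) (-(1/8) * t ^ ((-(1/8) - 1):ℝ)) t :=
    Real.hasDerivAt_rpow_const (Or.inl ht.ne')
  have h0b : HasDerivAt (fun t : ℝ => t ^ (-(9/8):ℝ)) (-(9/8) * t ^ ((-(9/8) - 1):ℝ)) t :=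
    Real.hasDerivAt_rpow_const (Or.inl ht.ne')
  have h1 := (((h0.const_mul c).const_sub 1).const_mul (c/4)).mul h0b
  refine h1.congr_deriv ?_
  have he : ((-(1/8) - 1):ℝ) = -(9/8) := by norm_num
  have he2 : ((-(9/8) - 1):ℝ) = -(17/8) := by norm_num
  rw [he, he2, q2]
  ring

lemma hasFDerivAt_Ff (c : ℝ) (z : E3) (hz : 0 < z 2) :
    HasFDerivAt (Ff c) (q1 c (wf z) • Wd z) z :=
  (hasDerivAt_outer c (wf z) (wf_pos z hz)).comp_hasFDerivAt z
    (hasFDerivAt_wf z (norm_pos_of z hz))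

lemma fderiv_Ff_apply (c : ℝ) (z : E3) (hz : 0 < z 2) (i : Fin 3) :
    fderiv ℝ (Ff c) z (EuclideanSpace.single i 1) = Pf c i z := by
  rw [(hasFDerivAt_Ff c z hz).fderiv]
  simp only [Pf, Wd, ContinuousLinearMap.coe_smul', Pi.smul_apply,
    ContinuousLinearMap.add_apply, ContinuousLinearMap.smul_apply, innerSL_apply_apply,
    PiLp.proj_apply, smul_eq_mul, Ei]
  have : ⟪z, EuclideanSpace.single i (1:ℝ)⟫ = z i := by
    rw [EuclideanSpace.inner_single_right]; simp
  rw [this]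
  have : (EuclideanSpace.single i (1:ℝ)) 2 = if (2:Fin 3) = i then 1 else 0 := by
    simp [EuclideanSpace.single_apply]
  rw [this]
  ring

lemma fderiv_Pf_apply (c : ℝ) (i : Fin 3) (z : E3) (hz : 0 < z 2) :
    fderiv ℝ (Pf c i) z (EuclideanSpace.single i 1) =
      q2 c (wf z) * ((4 + 2*(z 2)/‖z‖) * z i + 2*‖z‖*Ei i)^2
      + q1 c (wf z) * (4 + 2*(z 2)/‖z‖ + 4*(z i)*(Ei i)/‖z‖ - 2*(z 2)*(z i)^2/‖z‖^3) := by
  have hr := norm_pos_of z hz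
  have hq1w := (hasDerivAt_q1 c (wf z) (wf_pos z hz)).comp_hasFDerivAt z
    (hasFDerivAt_wf z (norm_pos_of z hz))
  have hir : HasFDerivAt (fun z : E3 => z i) (EuclideanSpace.proj (i : Fin 3) : E3 →L[ℝ] ℝ) z :=
    (EuclideanSpace.proj (i : Fin 3) : E3 →L[ℝ] ℝ).hasFDerivAt
  have hinv := (hasDerivAt_inv hr.ne').comp_hasFDerivAt z (hasFDerivAt_norm z hr)
  have ha := (((hasFDerivAt_coord z).mul hinv).const_mul (2:ℝ)).const_add (4:ℝ)
  have hB := (ha.mul hir).add (((hasFDerivAt_norm z hr).const_mul (2:ℝ)).mul_const (Ei i))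
  have hP := hq1w.mul hB
  have e1 : fderiv ℝ (Pf c i) z = _ := hP.fderiv
  rw [e1]
  simp only [ContinuousLinearMap.coe_smul', Pi.smul_apply, ContinuousLinearMap.add_apply,
    ContinuousLinearMap.smul_apply, innerSL_apply_apply, PiLp.proj_apply, smul_eq_mul,
    ContinuousLinearMap.coe_sub', Pi.sub_apply, Wd,
    ContinuousLinearMap.mul_apply, Function.comp, Pi.mul_apply, Pi.add_apply]
  have h1 : ⟪z, EuclideanSpace.single i (1:ℝ)⟫ = z i := by
    rw [EuclideanSpace.inner_single_right]; simp
  have h2 : (EuclideanSpace.single i (1:ℝ)) 2 = Ei i := by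
    simp [Ei, EuclideanSpace.single_apply]
  have h3 : (EuclideanSpace.single i (1:ℝ)) i = 1 := by
    simp [EuclideanSpace.single_apply]
  rw [h1, h2, h3]
  field_simp
  ring

lemma sum_alg (q1v q2v r u a b : ℝ) (hr : r ≠ 0) (h2 : r^2 = a^2+b^2+u^2) :
    (q2v * ((4 + 2*u/r) * a + 2*r*0)^2 + q1v * (4 + 2*u/r + 4*a*0/r - 2*u*a^2/r^3)) +
    (q2v * ((4 + 2*u/r) * b + 2*r*0)^2 + q1v * (4 + 2*u/r + 4*b*0/r - 2*u*b^2/r^3)) +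
    (q2v * ((4 + 2*u/r) * u + 2*r*1)^2 + q1v * (4 + 2*u/r + 4*u*1/r - 2*u*u^2/r^3))
    = q2v * (20*r^2 + 32*r*u + 12*u^2) + q1v * (12 + 8*u/r) := by
  field_simp
  linear_combination (2*q1v*u - q2v*(4*r+2*u)^2*r) * h2

lemma norm_sq_coords (y : E3) : ‖y‖^2 = (y 0)^2 + (y 1)^2 + (y 2)^2 := by
  have h : ⟪y, y⟫ = ‖y‖^2 := real_inner_self_eq_norm_sq y
  rw [← h, PiLp.inner_apply]
  simp [Fin.sum_univ_three]

lemma contDiffAt_Ff (c : ℝ) (y : E3) (hy : 0 < y 2) : ContDiffAt ℝ 2 (Ff c) y := by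
  have hr := norm_pos_of y hy
  have hy0 : y ≠ 0 := by
    intro h; rw [h] at hr; simp at hr
  have hn2 : ContDiffAt ℝ 2 (fun z : E3 => ‖z‖^2) y := (contDiff_norm_sq ℝ).contDiffAt
  have hn : ContDiffAt ℝ 2 (fun z : E3 => ‖z‖) y := contDiffAt_norm ℝ hy0
  have hco : ContDiffAt ℝ 2 (fun z : E3 => z 2) y :=
    (EuclideanSpace.proj (2 : Fin 3) : E3 →L[ℝ] ℝ).contDiff.contDiffAt
  have hw : ContDiffAt ℝ 2 wf y :=
    (contDiffAt_const.mul hn2).add (contDiffAt_const.mul (hn.mul hco))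
  have hrp : ContDiffAt ℝ 2 (fun z : E3 => wf z ^ (-(1/8):ℝ)) y :=
    hw.rpow_const_of_ne (wf_pos y hy).ne'
  exact (contDiffAt_const.sub (contDiffAt_const.mul hrp)).pow 2

end Stmt12Aux

open Stmt12Aux

set_option maxHeartbeats 2000000 in
/-- Superharmonicity estimate for `φ²`, where `φ(y) = 1 - A^{1/4}|y + |y|e₃|^{-1/4}`. -/
theorem stmt12 (A : ℝ) (hA : 0 < A) (φ : E3 → ℝ)
    (hφ : ∀ y : E3, 0 < y 2 →
      φ y = 1 - A ^ ((1 / 4 : ℝ)) * ‖y + ‖y‖ • e3‖ ^ (-(1 / 4) : ℝ)) :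
    ∀ y : E3, 0 < y 2 → 0 < φ y →
      ContDiffAt ℝ 2 (fun z : E3 => φ z ^ 2) y ∧
      (1 / 50) * A ^ ((1 / 2 : ℝ)) * ‖y‖ ^ (-(5 / 2) : ℝ) ≤
        lap (fun z : E3 => φ z ^ 2) y := by
  intro y hy2 hφy
  set c : ℝ := A ^ ((1/4 : ℝ)) with hc_def
  have hc : 0 < c := Real.rpow_pos_of_pos hA _
  -- the norm identity
  have hnorm_rpow : ∀ z : E3, 0 < z 2 →
      ‖z + ‖z‖ • e3‖ ^ (-(1/4) : ℝ) = wf z ^ (-(1/8):ℝ) := by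
    intro z hz
    have h2 : ‖z + ‖z‖ • e3‖^2 = wf z := norm_sq_eq_wf z
    have h12 : (wf z) ^ ((1/2):ℝ) = ‖z + ‖z‖ • e3‖ := by
      rw [← h2, ← Real.rpow_natCast (‖z + ‖z‖ • e3‖) 2, ← Real.rpow_mul (norm_nonneg _)]
      norm_num
    rw [← h12, ← Real.rpow_mul (wf_pos z hz).le]
    norm_num
  -- φ² agrees with Ff c near y
  have heq : ∀ z : E3, 0 < z 2 → φ z ^ 2 = Ff c z := by
    intro z hz
    rw [hφ z hz, Ff, hnorm_rpow z hz]
  have hopen : IsOpen {z : E3 | 0 < z 2} :=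
    isOpen_lt continuous_const (EuclideanSpace.proj (2 : Fin 3) : E3 →L[ℝ] ℝ).continuous
  have hUnhds : {z : E3 | 0 < z 2} ∈ nhds y := hopen.mem_nhds hy2
  have hev : (fun z : E3 => φ z ^ 2) =ᶠ[nhds y] Ff c :=
    Filter.eventuallyEq_of_mem hUnhds (fun z hz => heq z hz)
  constructor
  · exact (contDiffAt_Ff c y hy2).congr_of_eventuallyEq hev
  -- now the Laplacian estimate
  have hr : 0 < ‖y‖ := norm_pos_of y hy2
  have hW : 0 < wf y := wf_pos y hy2
  set r : ℝ := ‖y‖ with hr_def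
  set u : ℝ := y 2 with hu_def
  set W : ℝ := wf y with hW_def
  set s : ℝ := W ^ (-(1/8):ℝ) with hs_def
  have hs : 0 < s := Real.rpow_pos_of_pos hW _
  -- φ y = 1 - c * s > 0
  have hφ0 : 0 < 1 - c * s := by
    have := hφ y hy2
    rw [hnorm_rpow y hy2] at this
    rw [← this]; exact hφy
  -- Laplacian value
  have hlap : lap (fun z : E3 => φ z ^ 2) y =
      ∑ i : Fin 3, (q2 c W * ((4 + 2*u/r) * y i + 2*r*Ei i)^2
        + q1 c W * (4 + 2*u/r + 4*(y i)*(Ei i)/r - 2*u*(y i)^2/r^3)) := by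
    unfold lap
    refine Finset.sum_congr rfl fun i _ => ?_
    have hev2 : (fun z : E3 => fderiv ℝ (fun z : E3 => φ z ^ 2) z (EuclideanSpace.single i 1))
        =ᶠ[nhds y] Pf c i := by
      refine Filter.eventuallyEq_of_mem hUnhds (fun z hz => ?_)
      have hevz : (fun z : E3 => φ z ^ 2) =ᶠ[nhds z] Ff c :=
        Filter.eventuallyEq_of_mem (hopen.mem_nhds hz) (fun z' hz' => heq z' hz')
      rw [show (fderiv ℝ (fun z : E3 => φ z ^ 2) z) = fderiv ℝ (Ff c) z from hevz.fderiv_eq]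
      exact fderiv_Ff_apply c z hz i
    rw [hev2.fderiv_eq]
    exact fderiv_Pf_apply c i y hy2
  have hr2 : r^2 = (y 0)^2 + (y 1)^2 + u^2 := norm_sq_coords y
  have hE0 : Ei 0 = 0 := if_neg (by decide)
  have hE1 : Ei 1 = 0 := if_neg (by decide)
  have hE2 : Ei 2 = 1 := if_pos rfl
  rw [Fin.sum_univ_three, hE0, hE1, hE2, ← hu_def] at hlap
  rw [sum_alg (q1 c W) (q2 c W) r u (y 0) (y 1) hr.ne' hr2] at hlap
  -- closed form
  have hXrel : W ^ (-(9/8):ℝ) = s * W⁻¹ := by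
    rw [hs_def, ← Real.rpow_neg_one W, ← Real.rpow_add hW]
    norm_num
  have hYrel : W ^ (-(17/8):ℝ) = s * W⁻¹ * W⁻¹ := by
    rw [hs_def, ← Real.rpow_neg_one W, ← Real.rpow_add hW, ← Real.rpow_add hW]
    norm_num
  have hWexp : W = 2*r^2 + 2*(r*u) := rfl
  have hu_pos : 0 < u := hy2
  have hu_le : u ≤ r := by nlinarith [sq_nonneg (y 0), sq_nonneg (y 1)]
  have hclosed : lap (fun z : E3 => φ z ^ 2) y =
      c*s/(16*r*W) * (5*r + 3*u + (1 - c*s)*(2*u - 2*r)) := by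
    rw [hlap, q1, q2, hXrel, hYrel, ← hs_def]
    rw [hWexp]
    have hrne : r ≠ 0 := hr.ne'
    have hWne : (2*r^2 + 2*(r*u)) ≠ 0 := by rw [← hWexp]; exact hW.ne'
    field_simp
    ring
  rw [hclosed]
  -- lower bound for the bracket
  have hbr : 3*r ≤ 5*r + 3*u + (1 - c*s)*(2*u - 2*r) := by
    have hh : (0:ℝ) ≤ c*s*(2*r - 2*u) :=
      mul_nonneg (mul_nonneg hc.le hs.le) (by linarith)
    nlinarith [hh, hu_pos]
  have hstep1 : 3*c*s/(16*W) ≤ c*s/(16*r*W) * (5*r + 3*u + (1 - c*s)*(2*u - 2*r)) := by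
    have h1 : c*s/(16*r*W) * (3*r) ≤ c*s/(16*r*W) * (5*r + 3*u + (1 - c*s)*(2*u - 2*r)) := by
      apply mul_le_mul_of_nonneg_left hbr
      positivity
    calc 3*c*s/(16*W) = c*s/(16*r*W) * (3*r) := by field_simp
    _ ≤ _ := h1
  refine le_trans ?_ hstep1
  -- final rpow comparison
  have hcs : c * s < 1 := by linarith
  set Q : ℝ := W ^ ((1/8):ℝ) with hQ_def
  have hQ : 0 < Q := Real.rpow_pos_of_pos hW _
  have hsQ : s = Q⁻¹ := by
    rw [hs_def, hQ_def, ← Real.rpow_neg hW.le]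
  have hcQ : c ≤ Q := by
    rw [hsQ] at hcs
    have h1 : c / Q < 1 := by rwa [div_eq_mul_inv]
    have := (div_lt_one hQ).mp h1
    linarith
  have hWQ2 : W * Q^2 = W ^ ((5/4):ℝ) := by
    have h1 : Q^2 = W ^ ((1/4):ℝ) := by
      rw [hQ_def, ← Real.rpow_natCast (W ^ ((1/8):ℝ)) 2, ← Real.rpow_mul hW.le]
      norm_num
    calc W * Q^2 = W ^ (1:ℝ) * W ^ ((1/4):ℝ) := by rw [h1, Real.rpow_one]
    _ = W ^ ((5/4):ℝ) := by rw [← Real.rpow_add hW]; norm_num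
  have hW4 : W ≤ 4*r^2 := by rw [hWexp]; nlinarith
  have hP : 0 < r ^ ((5/2):ℝ) := Real.rpow_pos_of_pos hr _
  have h54 : W ^ ((5/4):ℝ) ≤ 8 * r ^ ((5/2):ℝ) := by
    have h1 : W ^ ((5/4):ℝ) ≤ (4*r^2) ^ ((5/4):ℝ) :=
      Real.rpow_le_rpow hW.le hW4 (by norm_num)
    have h2 : ((4:ℝ)*r^2) ^ ((5/4):ℝ) = (4:ℝ) ^ ((5/4):ℝ) * r ^ ((5/2):ℝ) := by
      rw [Real.mul_rpow (by norm_num) (sq_nonneg r)]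
      congr 1
      rw [← Real.rpow_natCast r 2, ← Real.rpow_mul hr.le]
      norm_num
    have h3 : (4:ℝ) ^ ((5/4):ℝ) ≤ 8 := by
      have ha : (4:ℝ) ^ ((5/4):ℝ) ≤ (4:ℝ) ^ ((3/2):ℝ) :=
        Real.rpow_le_rpow_of_exponent_le (by norm_num) (by norm_num)
      have h8 : (4:ℝ) ^ ((3/2):ℝ) = 8 := by
        rw [show (4:ℝ) = 2^(2:ℕ) by norm_num, ← Real.rpow_natCast (2:ℝ) 2,
          ← Real.rpow_mul (by norm_num : (0:ℝ) ≤ 2)]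
        rw [show ((2:ℕ):ℝ) * (3/2) = ((3:ℕ):ℝ) by norm_num, Real.rpow_natCast]
        norm_num
      linarith
    calc W ^ ((5/4):ℝ) ≤ (4*r^2) ^ ((5/4):ℝ) := h1
    _ = (4:ℝ) ^ ((5/4):ℝ) * r ^ ((5/2):ℝ) := h2
    _ ≤ 8 * r ^ ((5/2):ℝ) := mul_le_mul_of_nonneg_right h3 hP.le
  have key : 16*(W*Q^2) ≤ 150 * r^((5/2):ℝ) := by
    rw [hWQ2]; linarith [h54, hP]
  have hA12 : A ^ ((1/2):ℝ) = c^2 := by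
    rw [hc_def, ← Real.rpow_natCast (A ^ ((1/4:ℝ))) 2, ← Real.rpow_mul hA.le]
    norm_num
  have hrP : r ^ (-(5/2):ℝ) = (r ^ ((5/2):ℝ))⁻¹ := Real.rpow_neg hr.le (5/2)
  rw [hA12, hrP, hsQ]
  have lhs_eq : 1/50*c^2*(r^((5/2):ℝ))⁻¹ = c^2/(50*r^((5/2):ℝ)) := by
    field_simp
  have rhs_eq : 3*c*Q⁻¹/(16*W) = (3*c)/(16*W*Q) := by
    rw [div_eq_div_iff (by positivity) (by positivity)]
    field_simp
  rw [lhs_eq, rhs_eq, div_le_div_iff₀ (by positivity) (by positivity)]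
  have hWQpos : (0:ℝ) < 16*W*Q := by positivity
  calc c^2*(16*W*Q) = (c*c)*(16*W*Q) := by ring
  _ ≤ (c*Q)*(16*W*Q) :=
    mul_le_mul_of_nonneg_right (mul_le_mul_of_nonneg_left hcQ hc.le) hWQpos.le
  _ = c*(16*(W*Q^2)) := by ring
  _ ≤ c*(150*r^((5/2):ℝ)) := mul_le_mul_of_nonneg_left key hc.le
  _ = 3*c*(50*r^((5/2):ℝ)) := by ring
end
end

section
/- Let Λ > 0, 0 < m ≤ 1, T > Λ m², and 0 < R₁ < ρ. Let Ω = {y ∈ ℝ³ : y₃ > −T, R₁ < |y| < ρ} and let Γ = {y ∈ ℝ³ : y₃ = −T, R₁ < |y| < ρ} (the flat part of ∂Ω). Let u be continuous on the closure of Ω, C² in Ω, C¹ on Ω ∪ Γ, positive, with Δu ≤ 0 in Ω, ∂u/∂y₃ (y) ≤ Λ u(y)³ for every y ∈ Γ, and u(y) > m/|y| for every y ∈ ∂Ω \ Γ. Then u(y) > m/|y| for every y ∈ Ω. -/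
open Metric Set MeasureTheory

noncomputable section

/-- The half-annulus `Ω` at height `-T`. -/
def Om (T R₁ ρ : ℝ) : Set E3 := {y | -T < y 2 ∧ R₁ < ‖y‖ ∧ ‖y‖ < ρ}

/-- The flat boundary part `Γ` of `Ω`. -/
def Ga (T R₁ ρ : ℝ) : Set E3 := {y | y 2 = -T ∧ R₁ < ‖y‖ ∧ ‖y‖ < ρ}

open Filter

def q3 (y : E3) : ℝ := ∑ i, y i ^ 2

lemma q3_eq (y : E3) : q3 y = ‖y‖ ^ 2 := by
  rw [EuclideanSpace.norm_eq, Real.sq_sqrt (by positivity)]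
  simp [q3, sq_abs]

lemma q3_nonneg (y : E3) : 0 ≤ q3 y := by rw [q3_eq]; positivity

def Dq3 (x : E3) : E3 →L[ℝ] ℝ := ∑ i, (2 * x i) • EuclideanSpace.proj (𝕜 := ℝ) i

lemma hasFDerivAt_q3 (x : E3) : HasFDerivAt q3 (Dq3 x) x := by
  have h : ∀ i : Fin 3, HasFDerivAt (fun y : E3 => y i ^ 2)
      ((2 * x i) • EuclideanSpace.proj (𝕜 := ℝ) i) x := by
    intro i
    have h1 : HasFDerivAt (fun y : E3 => y i) (EuclideanSpace.proj (𝕜 := ℝ) i) x :=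
      (EuclideanSpace.proj (𝕜 := ℝ) i).hasFDerivAt
    have := h1.mul h1
    have h2 : ∀ y : E3, y i ^ 2 = y i * y i := fun y => sq (y i)
    simp only [h2]
    exact this.congr_fderiv (by rw [two_mul, add_smul])
  have := HasFDerivAt.fun_sum (fun (i : Fin 3) (_ : i ∈ Finset.univ) => h i)
  exact this

lemma Dq3_apply (x : E3) (j : Fin 3) : Dq3 x (EuclideanSpace.single j 1) = 2 * x j := by
  simp [Dq3, ContinuousLinearMap.sum_apply, EuclideanSpace.single_apply]

lemma hasFDerivAt_q3_rpow (r : ℝ) {x : E3} (hx : q3 x ≠ 0) :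
    HasFDerivAt (fun y => q3 y ^ r) ((r * q3 x ^ (r - 1)) • Dq3 x) x :=
  (Real.hasDerivAt_rpow_const (Or.inl hx)).comp_hasFDerivAt x (hasFDerivAt_q3 x)

def Fm (m : ℝ) (y : E3) : ℝ := m * q3 y ^ (-(1/2) : ℝ)
def Gm (m : ℝ) (i : Fin 3) (y : E3) : ℝ := -m * y i * q3 y ^ (-(3/2) : ℝ)

lemma Fm_eq (m : ℝ) (y : E3) : Fm m y = m / ‖y‖ := by
  rcases eq_or_ne ‖y‖ 0 with h | h
  · have : q3 y = 0 := by rw [q3_eq, h]; ring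
    rw [Fm, this, h, Real.zero_rpow (by norm_num), div_zero, mul_zero]
  · rw [Fm, q3_eq, Real.rpow_neg (by positivity),
      show ((1:ℝ)/2) = (2:ℝ)⁻¹ by norm_num, ← Real.rpow_natCast ‖y‖ 2,
      ← Real.rpow_mul (norm_nonneg y)]
    norm_num [div_eq_mul_inv]

lemma hasFDerivAt_Fm (m : ℝ) {x : E3} (hx : q3 x ≠ 0) :
    HasFDerivAt (Fm m) ((-(m/2) * q3 x ^ (-(3/2) : ℝ)) • Dq3 x) x := by
  have := (hasFDerivAt_q3_rpow (-(1/2)) hx).const_mul m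
  have e : (-(1/2) : ℝ) - 1 = -(3/2) := by norm_num
  rw [e] at this
  exact this.congr_fderiv (by rw [smul_smul]; congr 1; ring)

lemma hasFDerivAt_Gm (m : ℝ) (i : Fin 3) {x : E3} (hx : q3 x ≠ 0) :
    HasFDerivAt (Gm m i)
      ((-m * x i) • (((-(3/2) : ℝ) * q3 x ^ (-(5/2) : ℝ)) • Dq3 x)
        + (q3 x ^ (-(3/2) : ℝ)) • ((-m) • EuclideanSpace.proj (𝕜 := ℝ) i)) x := by
  have h1 : HasFDerivAt (fun y : E3 => -m * y i) ((-m) • EuclideanSpace.proj (𝕜 := ℝ) i) x :=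
    (EuclideanSpace.proj (𝕜 := ℝ) i).hasFDerivAt.const_mul (-m)
  have h2 := hasFDerivAt_q3_rpow (-(3/2)) hx
  have e : (-(3/2) : ℝ) - 1 = -(5/2) := by norm_num
  rw [e] at h2
  exact h1.mul h2

lemma fderiv_Gm_single (m : ℝ) (i : Fin 3) {x : E3} (hx : q3 x ≠ 0) :
    fderiv ℝ (Gm m i) x (EuclideanSpace.single i 1)
      = 3 * m * x i ^ 2 * q3 x ^ (-(5/2) : ℝ) - m * q3 x ^ (-(3/2) : ℝ) := by
  rw [(hasFDerivAt_Gm m i hx).fderiv]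
  simp [Dq3_apply, EuclideanSpace.single_apply]
  ring

lemma sum_fderiv_Gm (m : ℝ) {x : E3} (hx : 0 < q3 x) :
    ∑ i, fderiv ℝ (Gm m i) x (EuclideanSpace.single i 1) = 0 := by
  have h : ∀ i : Fin 3, fderiv ℝ (Gm m i) x (EuclideanSpace.single i 1)
      = 3 * m * x i ^ 2 * q3 x ^ (-(5/2) : ℝ) - m * q3 x ^ (-(3/2) : ℝ) :=
    fun i => fderiv_Gm_single m i hx.ne'
  simp only [h, Finset.sum_sub_distrib, ← Finset.sum_mul]
  have e1 : ∑ i, 3 * m * x i ^ 2 = 3 * m * q3 x := by rw [q3, Finset.mul_sum]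
  have e2 : q3 x * q3 x ^ (-(5/2) : ℝ) = q3 x ^ (-(3/2) : ℝ) := by
    nth_rewrite 1 [← Real.rpow_one (q3 x)]
    rw [← Real.rpow_add hx]; norm_num
  rw [e1, Finset.sum_const, Finset.card_univ]
  simp only [Fintype.card_fin, nsmul_eq_mul, Nat.cast_ofNat]
  linear_combination 3 * m * e2

lemma cont2 : Continuous (fun y : E3 => y 2) := by
  have := (EuclideanSpace.proj (𝕜 := ℝ) (2 : Fin 3)).continuous
  exact this

lemma line_apply (z : E3) (t : ℝ) : (z + t • e3) 2 = z 2 + t := by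
  rw [PiLp.add_apply, PiLp.smul_apply, e3, EuclideanSpace.single_apply]
  simp

lemma line_tendsto (z : E3) : Tendsto (fun t : ℝ => z + t • e3) (nhds 0) (nhds z) := by
  have : Continuous (fun t : ℝ => z + t • e3) := by continuity
  simpa using this.tendsto 0

section
variable {T R₁ ρ : ℝ}

lemma isOpen_Om : IsOpen (Om T R₁ ρ) := by
  have h1 : IsOpen {y : E3 | -T < y 2} := isOpen_lt continuous_const cont2
  have h2 : IsOpen {y : E3 | R₁ < ‖y‖} := isOpen_lt continuous_const continuous_norm
  have h3 : IsOpen {y : E3 | ‖y‖ < ρ} := isOpen_lt continuous_norm continuous_const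
  exact (h1.inter (h2.inter h3))

lemma closure_Om_subset :
    closure (Om T R₁ ρ) ⊆ {y | -T ≤ y 2 ∧ R₁ ≤ ‖y‖ ∧ ‖y‖ ≤ ρ} := by
  apply closure_minimal
  · exact fun y hy => ⟨hy.1.le, hy.2.1.le, hy.2.2.le⟩
  · exact ((isClosed_le continuous_const cont2).inter
      ((isClosed_le continuous_const continuous_norm).inter
        (isClosed_le continuous_norm continuous_const)))

/-- points just above a `Ga` point are in `Om`. -/
lemma eventually_line_mem {z : E3} (hz : z ∈ Ga T R₁ ρ) :
    ∀ᶠ t in nhdsWithin (0:ℝ) (Ioi 0), z + t • e3 ∈ Om T R₁ ρ := by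
  have hn : ∀ᶠ t in nhds (0:ℝ), R₁ < ‖z + t • e3‖ ∧ ‖z + t • e3‖ < ρ := by
    have hc : Continuous fun t : ℝ => ‖z + t • e3‖ := by continuity
    have h0 : R₁ < ‖z + (0:ℝ) • e3‖ ∧ ‖z + (0:ℝ) • e3‖ < ρ := by simpa using hz.2
    have h2 := (hc.tendsto 0).eventually (eventually_lt_nhds h0.2)
    have h1 := (hc.tendsto 0).eventually (eventually_gt_nhds h0.1)
    exact h1.and h2
  filter_upwards [nhdsWithin_le_nhds hn, self_mem_nhdsWithin] with t ht ht0
  refine ⟨?_, ht.1, ht.2⟩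
  rw [line_apply, hz.1]
  linarith [mem_Ioi.mp ht0]

lemma Ga_subset_closure {z : E3} (hz : z ∈ Ga T R₁ ρ) : z ∈ closure (Om T R₁ ρ) := by
  have ht : Tendsto (fun t : ℝ => z + t • e3) (nhdsWithin (0:ℝ) (Ioi 0)) (nhds z) :=
    (line_tendsto z).mono_left nhdsWithin_le_nhds
  exact mem_closure_of_tendsto ht (eventually_line_mem hz)

lemma isCompact_closure_Om (hρ : 0 < ρ) : IsCompact (closure (Om T R₁ ρ)) := by
  apply Metric.isCompact_of_isClosed_isBounded isClosed_closure
  apply Bornology.IsBounded.subset (Metric.isBounded_closedBall (x := (0:E3)) (r := ρ))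
  intro y hy
  exact mem_closedBall_zero_iff.mpr (closure_Om_subset hy).2.2

lemma diffS_eq :
    closure (Om T R₁ ρ) \ (Om T R₁ ρ ∪ Ga T R₁ ρ)
      = closure (Om T R₁ ρ) ∩ {y | ‖y‖ ≤ R₁ ∨ ρ ≤ ‖y‖} := by
  ext y
  constructor
  · rintro ⟨hc, hns⟩
    refine ⟨hc, ?_⟩
    by_contra h
    simp only [mem_setOf_eq, not_or, not_le] at h
    obtain ⟨h1, h2⟩ := h
    have hK := closure_Om_subset hc
    rcases eq_or_lt_of_le hK.1 with he | hlt
    · exact hns (Or.inr ⟨he.symm, h1, h2⟩)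
    · exact hns (Or.inl ⟨hlt, h1, h2⟩)
  · rintro ⟨hc, h⟩
    refine ⟨hc, ?_⟩
    rintro (ho | hg)
    · rcases h with h | h
      · exact absurd ho.2.1 (not_lt.mpr h)
      · exact absurd ho.2.2 (not_lt.mpr h)
    · rcases h with h | h
      · exact absurd hg.2.1 (not_lt.mpr h)
      · exact absurd hg.2.2 (not_lt.mpr h)

lemma isCompact_diff (hρ : 0 < ρ) :
    IsCompact (closure (Om T R₁ ρ) \ (Om T R₁ ρ ∪ Ga T R₁ ρ)) := by
  rw [diffS_eq]
  apply (isCompact_closure_Om hρ).of_isClosed_subset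
  · exact isClosed_closure.inter ((isClosed_le continuous_norm continuous_const).union
      (isClosed_le continuous_const continuous_norm))
  · exact inter_subset_left
end

lemma oneSided_nonneg (w : ℝ → ℝ) {d δ : ℝ} (hδ : 0 < δ)
    (hd : HasDerivWithinAt w d (Ico 0 δ) 0)
    (hmin : ∀ t ∈ Ico 0 δ, w 0 ≤ w t) : 0 ≤ d := by
  rw [hasDerivWithinAt_iff_tendsto_slope] at hd
  have hIoo : Ico (0:ℝ) δ \ {0} = Ioo 0 δ := by
    ext t
    simp only [mem_diff, mem_Ico, mem_singleton_iff, mem_Ioo]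
    constructor
    · rintro ⟨⟨h1, h2⟩, h3⟩; exact ⟨lt_of_le_of_ne h1 (Ne.symm h3), h2⟩
    · rintro ⟨h1, h2⟩; exact ⟨⟨h1.le, h2⟩, h1.ne'⟩
  rw [hIoo] at hd
  haveI : (nhdsWithin (0:ℝ) (Ioo 0 δ)).NeBot := by
    apply mem_closure_iff_nhdsWithin_neBot.mp
    rw [closure_Ioo hδ.ne]
    exact left_mem_Icc.mpr hδ.le
  refine ge_of_tendsto hd ?_
  filter_upwards [self_mem_nhdsWithin] with t ht
  rw [slope_def_field]
  have h1 : w 0 ≤ w t := hmin t ⟨ht.1.le, ht.2⟩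
  have := ht.1
  rw [div_eq_mul_inv, sub_zero]
  exact mul_nonneg (sub_nonneg.mpr h1) (inv_nonneg.mpr ht.1.le)

lemma second_deriv_nonneg (w : E3 → ℝ) (z : E3) (U : Set E3) (hU : IsOpen U) (hzU : z ∈ U)
    (hw : ∀ x ∈ U, DifferentiableAt ℝ w x) (i : Fin 3)
    (hψ : DifferentiableAt ℝ (fun y => fderiv ℝ w y (EuclideanSpace.single i 1)) z)
    (hmin : IsLocalMin w z) :
    0 ≤ fderiv ℝ (fun y => fderiv ℝ w y (EuclideanSpace.single i 1)) z
      (EuclideanSpace.single i 1) := by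
  by_contra hA
  push_neg at hA
  set v : E3 := EuclideanSpace.single i 1 with hv_def
  have hv : ‖v‖ = 1 := by rw [hv_def, EuclideanSpace.norm_single]; norm_num
  set ψ : E3 → ℝ := fun y => fderiv ℝ w y v with hψ_def
  set A : ℝ := fderiv ℝ ψ z v with hA_def
  -- the line through z in direction v
  set L : ℝ → E3 := fun t => z + t • v with hL_def
  have hL0 : L 0 = z := by simp [hL_def]
  have hLd : ∀ t : ℝ, HasDerivAt L v t := by
    intro t
    have h1 : HasDerivAt (fun s : ℝ => s • v) ((1:ℝ) • v) t :=
      (hasDerivAt_id t).smul_const v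
    simpa [hL_def] using h1.const_add z
  have hdistL : ∀ t : ℝ, dist (L t) z = |t| := by
    intro t
    rw [hL_def, dist_eq_norm]
    simp [norm_smul, hv]
  -- ψ z = 0
  have hψz : ψ z = 0 := by
    rw [hψ_def]
    simp only []
    rw [hmin.fderiv_eq_zero]
    rfl
  -- h := ψ ∘ L has derivative A at 0
  have hh : HasDerivAt (fun t => ψ (L t)) A 0 := by
    have hc : HasFDerivAt ψ (fderiv ℝ ψ z) (L 0) := by rw [hL0]; exact hψ.hasFDerivAt
    have := hc.comp_hasDerivAt 0 (hLd 0)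
    exact this
  -- slope of h is eventually negative near 0
  have hslope : ∀ᶠ t in nhdsWithin (0:ℝ) {(0:ℝ)}ᶜ, slope (fun t => ψ (L t)) 0 t < 0 := by
    have := hasDerivAt_iff_tendsto_slope.mp hh
    exact this.eventually (gt_mem_nhds hA)
  rw [eventually_nhdsWithin_iff] at hslope
  rw [Metric.eventually_nhds_iff] at hslope
  obtain ⟨δ₂, hδ₂, hs2⟩ := hslope
  -- ball inside U
  obtain ⟨δ₁, hδ₁, hb1⟩ := Metric.isOpen_iff.mp hU z hzU
  -- local min radius
  have hminev := hmin
  rw [IsLocalMin, IsMinFilter, Metric.eventually_nhds_iff] at hminev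
  obtain ⟨δ₃, hδ₃, hm3⟩ := hminev
  set δ : ℝ := min (min δ₁ δ₂) δ₃ / 2 with hδ_def
  have hδ : 0 < δ := by positivity
  have hδ1 : δ < δ₁ := by
    have : min (min δ₁ δ₂) δ₃ ≤ δ₁ := le_trans (min_le_left _ _) (min_le_left _ _)
    linarith
  have hδ2 : δ < δ₂ := by
    have : min (min δ₁ δ₂) δ₃ ≤ δ₂ := le_trans (min_le_left _ _) (min_le_right _ _)
    linarith
  have hδ3 : δ < δ₃ := by
    have : min (min δ₁ δ₂) δ₃ ≤ δ₃ := min_le_right _ _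
    linarith
  -- g := w ∘ L
  have hg : ∀ t ∈ Icc (0:ℝ) δ, HasDerivAt (fun s => w (L s)) (ψ (L t)) t := by
    intro t ht
    have htU : L t ∈ U := by
      apply hb1
      rw [mem_ball, hdistL, abs_of_nonneg ht.1]
      exact lt_of_le_of_lt ht.2 hδ1
    exact ((hw _ htU).hasFDerivAt.comp_hasDerivAt t (hLd t))
  have hanti : StrictAntiOn (fun s => w (L s)) (Icc 0 δ) := by
    apply strictAntiOn_of_deriv_neg (convex_Icc 0 δ)
    · intro t ht
      exact (hg t ht).continuousAt.continuousWithinAt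
    · intro t ht
      rw [interior_Icc] at ht
      rw [(hg t ⟨ht.1.le, ht.2.le⟩).deriv]
      have hst := hs2 (y := t) (by rw [Real.dist_eq, sub_zero, abs_of_nonneg ht.1.le]; exact lt_trans ht.2 hδ2) (by simp [ht.1.ne'])
      rw [slope_def_field] at hst
      simp only [hL0, hψz, sub_zero] at hst
      by_contra hcon
      push_neg at hcon
      have := div_nonneg hcon ht.1.le
      linarith
  have hlt := hanti (left_mem_Icc.mpr hδ.le) (right_mem_Icc.mpr hδ.le) hδ
  simp only [hL0] at hlt
  have hge : w z ≤ w (L δ) := hm3 (by rw [hdistL, abs_of_nonneg hδ.le]; exact hδ3)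
  linarith

set_option maxHeartbeats 1000000 in
/-- Maximum-principle claim underlying Lemma mar26lem1. -/
theorem stmt16 (Λ m T R₁ ρ : ℝ) (hΛ : 0 < Λ) (hm0 : 0 < m) (hm1 : m ≤ 1)
    (hT : Λ * m ^ 2 < T) (hR₁ : 0 < R₁) (hρ : R₁ < ρ) (u : E3 → ℝ)
    (hcont : ContinuousOn u (closure (Om T R₁ ρ)))
    (hC2 : ContDiffOn ℝ 2 u (Om T R₁ ρ))
    (hC1 : ContDiffOn ℝ 1 u (Om T R₁ ρ ∪ Ga T R₁ ρ))
    (hpos : ∀ y ∈ closure (Om T R₁ ρ), 0 < u y)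
    (hsuper : ∀ y ∈ Om T R₁ ρ, lap u y ≤ 0)
    (hbdry : ∀ y ∈ Ga T R₁ ρ,
      fderivWithin ℝ u (Om T R₁ ρ ∪ Ga T R₁ ρ) y e3 ≤ Λ * u y ^ 3)
    (hout : ∀ y ∈ closure (Om T R₁ ρ) \ (Om T R₁ ρ ∪ Ga T R₁ ρ), m / ‖y‖ < u y) :
    ∀ y ∈ Om T R₁ ρ, m / ‖y‖ < u y := by
  by_contra hcon
  push_neg at hcon
  obtain ⟨y₀, hy₀, hy₀le⟩ := hcon
  have hT0 : 0 < T := lt_trans (by positivity) hT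
  have hρ0 : 0 < ρ := lt_trans hR₁ hρ
  set C := closure (Om T R₁ ρ) with hC_def
  set S := Om T R₁ ρ ∪ Ga T R₁ ρ with hS_def
  have hOmC : Om T R₁ ρ ⊆ C := subset_closure
  have hSC : S ⊆ C := union_subset subset_closure (fun z hz => Ga_subset_closure hz)
  have hnormC : ∀ y ∈ C, R₁ ≤ ‖y‖ ∧ ‖y‖ ≤ ρ := fun y hy =>
    ⟨(closure_Om_subset hy).2.1, (closure_Om_subset hy).2.2⟩
  have hq3C : ∀ y ∈ C, 0 < q3 y := by
    intro y hy
    rw [q3_eq]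
    have := lt_of_lt_of_le hR₁ (hnormC y hy).1
    positivity
  -- the constant c bounding u - m/‖·‖ from below on the outer boundary
  obtain ⟨c, hc0, hcle⟩ :
      ∃ c : ℝ, 0 < c ∧ ∀ y ∈ C \ S, c ≤ u y - m / ‖y‖ := by
    rcases eq_empty_or_nonempty (C \ S) with he | hne
    · exact ⟨1, one_pos, by rw [he]; simp⟩
    · have hwcont : ContinuousOn (fun y => u y - m / ‖y‖) (C \ S) := by
        apply (hcont.mono diff_subset).sub
        apply ContinuousOn.div continuousOn_const continuous_norm.continuousOn
        intro y hy
        have := lt_of_lt_of_le hR₁ (hnormC y hy.1).1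
        positivity
      obtain ⟨ys, hys, hysmin⟩ := (isCompact_diff hρ0).exists_isMinOn hne hwcont
      exact ⟨u ys - m / ‖ys‖, sub_pos.mpr (hout ys hys), fun y hy => hysmin hy⟩
  -- choose ε
  have hφ0 : Λ * (m + 0 * ρ ^ 3) ^ 3 + 2 * 0 * T * ρ ^ 3 < m * T := by
    have : Λ * m ^ 2 * m < T * m := by
      apply mul_lt_mul_of_pos_right hT hm0
    nlinarith
  have hφ : ∀ᶠ e in nhds (0:ℝ), Λ * (m + e * ρ ^ 3) ^ 3 + 2 * e * T * ρ ^ 3 < m * T := by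
    have hcφ : Continuous fun e : ℝ => Λ * (m + e * ρ ^ 3) ^ 3 + 2 * e * T * ρ ^ 3 := by
      continuity
    exact (hcφ.tendsto 0).eventually_lt_const hφ0
  rw [Metric.eventually_nhds_iff] at hφ
  obtain ⟨δφ, hδφ, hφ⟩ := hφ
  set ε : ℝ := min (δφ / 2) (c / (2 * ρ ^ 2)) with hε_def
  have hε0 : 0 < ε := lt_min (by positivity) (by positivity)
  have hεφ : Λ * (m + ε * ρ ^ 3) ^ 3 + 2 * ε * T * ρ ^ 3 < m * T := by
    apply hφ
    rw [Real.dist_eq, sub_zero, abs_of_pos hε0]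
    calc ε ≤ δφ / 2 := min_le_left _ _
      _ < δφ := by linarith
  have hερ : ε * ρ ^ 2 < c := by
    calc ε * ρ ^ 2 ≤ (c / (2 * ρ ^ 2)) * ρ ^ 2 :=
          mul_le_mul_of_nonneg_right (min_le_right _ _) (by positivity)
      _ = c / 2 := by field_simp
      _ < c := by linarith
  -- perturbed function
  set W : E3 → ℝ := fun y => u y - Fm m y - ε * q3 y with hW_def
  have hWval : ∀ y : E3, W y = u y - m / ‖y‖ - ε * ‖y‖ ^ 2 := by
    intro y; rw [hW_def]; simp only [Fm_eq, q3_eq]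
  have hCcomp : IsCompact C := isCompact_closure_Om hρ0
  have hWcont : ContinuousOn W C := by
    have h1 : ContinuousOn (fun y : E3 => m / ‖y‖) C := by
      apply ContinuousOn.div continuousOn_const continuous_norm.continuousOn
      intro y hy
      have := lt_of_lt_of_le hR₁ (hnormC y hy).1
      positivity
    have h2 : ContinuousOn (fun y : E3 => u y - m / ‖y‖ - ε * ‖y‖ ^ 2) C :=
      (hcont.sub h1).sub ((continuous_const.mul (continuous_norm.pow 2)).continuousOn)
    exact h2.congr (fun y _ => hWval y)
  obtain ⟨z, hzC, hzmin⟩ := hCcomp.exists_isMinOn ⟨y₀, hOmC hy₀⟩ hWcont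
  have hy₀C : y₀ ∈ C := hOmC hy₀
  have hWy₀ : W y₀ < 0 := by
    rw [hWval]
    have h1 : 0 < ‖y₀‖ := lt_of_lt_of_le hR₁ (hnormC y₀ hy₀C).1
    nlinarith [hy₀le, mul_pos hε0 (pow_pos h1 2)]
  have hWz : W z < 0 := lt_of_le_of_lt (hzmin hy₀C) hWy₀
  have hzS : z ∈ S := by
    by_contra hns
    have h1 := hcle z ⟨hzC, hns⟩
    have h2 : ε * ‖z‖ ^ 2 ≤ ε * ρ ^ 2 := by
      apply mul_le_mul_of_nonneg_left _ hε0.le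
      have := (hnormC z hzC).2
      nlinarith [norm_nonneg z]
    rw [hWval z] at hWz
    linarith
  rcases hzS with hzOm | hzGa
  · -- interior case
    have hOmnhds : Om T R₁ ρ ∈ nhds z := isOpen_Om.mem_nhds hzOm
    have hlocmin : IsLocalMin W z := hzmin.isLocalMin (mem_of_superset hOmnhds hOmC)
    have hq3ne : ∀ x ∈ Om T R₁ ρ, q3 x ≠ 0 := fun x hx => (hq3C x (hOmC hx)).ne'
    have hu2 : ∀ x ∈ Om T R₁ ρ, ContDiffAt ℝ 2 u x := fun x hx =>
      (hC2 x hx).contDiffAt (isOpen_Om.mem_nhds hx)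
    have hudiff : ∀ x ∈ Om T R₁ ρ, DifferentiableAt ℝ u x := fun x hx =>
      (hu2 x hx).differentiableAt (by norm_num)
    have hWdiff : ∀ x ∈ Om T R₁ ρ, DifferentiableAt ℝ W x := by
      intro x hx
      rw [hW_def]
      exact ((hudiff x hx).sub (hasFDerivAt_Fm m (hq3ne x hx)).differentiableAt).sub
        (((hasFDerivAt_q3 x).differentiableAt).const_mul ε)
    have hfd : ∀ x ∈ Om T R₁ ρ, ∀ i : Fin 3,
        fderiv ℝ W x (EuclideanSpace.single i 1)
          = fderiv ℝ u x (EuclideanSpace.single i 1) - Gm m i x - (2 * ε) * x i := by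
      intro x hx i
      have hWfd : HasFDerivAt W
          (fderiv ℝ u x - (-(m/2) * q3 x ^ (-(3/2):ℝ)) • Dq3 x - ε • Dq3 x) x :=
        (((hudiff x hx).hasFDerivAt).sub (hasFDerivAt_Fm m (hq3ne x hx))).sub
          ((hasFDerivAt_q3 x).const_mul ε)
      rw [hWfd.fderiv]
      simp only [ContinuousLinearMap.coe_sub', Pi.sub_apply, ContinuousLinearMap.coe_smul',
        Pi.smul_apply, smul_eq_mul, Dq3_apply, Gm]
      ring
    have key : ∀ i : Fin 3,
        DifferentiableAt ℝ (fun y => fderiv ℝ W y (EuclideanSpace.single i 1)) z ∧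
        fderiv ℝ (fun y => fderiv ℝ W y (EuclideanSpace.single i 1)) z
            (EuclideanSpace.single i 1)
          = fderiv ℝ (fun y => fderiv ℝ u y (EuclideanSpace.single i 1)) z
              (EuclideanSpace.single i 1)
            - fderiv ℝ (Gm m i) z (EuclideanSpace.single i 1) - 2 * ε := by
      intro i
      have hEq : (fun y => fderiv ℝ W y (EuclideanSpace.single i 1)) =ᶠ[nhds z]
          (fun y => fderiv ℝ u y (EuclideanSpace.single i 1) - Gm m i y - (2*ε) * y i) :=
        eventually_of_mem hOmnhds (fun x hx => hfd x hx i)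
      have hd1 : DifferentiableAt ℝ
          (fun y => fderiv ℝ u y (EuclideanSpace.single i 1)) z := by
        have hru : ContDiffAt ℝ 1 (fderiv ℝ u) z :=
          (hu2 z hzOm).fderiv_right (m := 1) (by norm_num)
        exact (hru.differentiableAt one_ne_zero).clm_apply (differentiableAt_const _)
      have hd2 : DifferentiableAt ℝ (Gm m i) z :=
        (hasFDerivAt_Gm m i (hq3ne z hzOm)).differentiableAt
      have hlin : HasFDerivAt (fun y : E3 => (2*ε) * y i)
          ((2*ε) • EuclideanSpace.proj (𝕜 := ℝ) i) z :=
        (EuclideanSpace.proj (𝕜 := ℝ) i).hasFDerivAt.const_mul (2*ε)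
      have hd3 : DifferentiableAt ℝ (fun y : E3 => (2*ε) * y i) z := hlin.differentiableAt
      have hdφ : DifferentiableAt ℝ
          (fun y => fderiv ℝ u y (EuclideanSpace.single i 1) - Gm m i y - (2*ε) * y i) z :=
        (hd1.sub hd2).sub hd3
      refine ⟨hEq.differentiableAt_iff.mpr hdφ, ?_⟩
      rw [hEq.fderiv_eq, fderiv_fun_sub (f := fun y => fderiv ℝ u y (EuclideanSpace.single i 1) - Gm m i y) (hd1.sub hd2) hd3,
        fderiv_fun_sub (f := fun y => fderiv ℝ u y (EuclideanSpace.single i 1)) hd1 hd2, hlin.fderiv]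
      simp only [ContinuousLinearMap.coe_sub', Pi.sub_apply, ContinuousLinearMap.coe_smul',
        Pi.smul_apply, smul_eq_mul]
      have : (EuclideanSpace.proj (𝕜 := ℝ) i) (EuclideanSpace.single i 1) = 1 := by
        simp [EuclideanSpace.single_apply]
      rw [this]
      ring
    have hsum : ∑ i : Fin 3, fderiv ℝ (fun y => fderiv ℝ W y (EuclideanSpace.single i 1)) z
        (EuclideanSpace.single i 1) < 0 := by
      rw [Finset.sum_congr rfl (fun i _ => (key i).2)]
      rw [Finset.sum_sub_distrib, Finset.sum_sub_distrib, sum_fderiv_Gm m (hq3C z hzC)]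
      have hlap : ∑ i : Fin 3, fderiv ℝ (fun y => fderiv ℝ u y (EuclideanSpace.single i 1)) z
          (EuclideanSpace.single i 1) = lap u z := rfl
      rw [hlap, Finset.sum_const, Finset.card_univ]
      simp only [Fintype.card_fin, nsmul_eq_mul, Nat.cast_ofNat]
      have := hsuper z hzOm
      linarith
    obtain ⟨i, hi⟩ : ∃ i : Fin 3,
        fderiv ℝ (fun y => fderiv ℝ W y (EuclideanSpace.single i 1)) z
          (EuclideanSpace.single i 1) < 0 := by
      by_contra h
      push_neg at h
      exact absurd hsum (not_lt.mpr (Finset.sum_nonneg (fun i _ => h i)))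
    exact absurd (second_deriv_nonneg W z (Om T R₁ ρ) isOpen_Om hzOm hWdiff i
      (key i).1 hlocmin) (not_le.mpr hi)
  · -- boundary case
    have hzS : z ∈ S := Or.inr hzGa
    have hq3z : 0 < q3 z := hq3C z hzC
    have hDu : HasFDerivWithinAt u (fderivWithin ℝ u S z) S z :=
      ((hC1 z hzS).differentiableWithinAt one_ne_zero).hasFDerivWithinAt
    set D := fderivWithin ℝ u S z with hD_def
    have hev := eventually_line_mem hzGa
    rw [eventually_nhdsWithin_iff, Metric.eventually_nhds_iff] at hev
    obtain ⟨δ, hδ0, hδ⟩ := hev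
    have hℓ0 : z + (0:ℝ) • e3 = z := by simp
    have hmaps : MapsTo (fun t : ℝ => z + t • e3) (Ico 0 δ) S := by
      intro t ht
      rcases eq_or_lt_of_le ht.1 with h0 | h0
      · rw [← h0]
        simp only [hℓ0]
        exact Or.inr hzGa
      · exact Or.inl (hδ (by rw [Real.dist_eq, sub_zero, abs_of_pos h0]; exact ht.2)
          (mem_Ioi.mpr h0))
    have hline : ∀ t : ℝ, HasDerivAt (fun s : ℝ => z + s • e3) e3 t := by
      intro t
      have h1 : HasDerivAt (fun s : ℝ => s • e3) ((1:ℝ) • e3) t :=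
        (hasDerivAt_id t).smul_const e3
      simpa using h1.const_add z
    have hlineW : HasDerivWithinAt (fun s : ℝ => z + s • e3) e3 (Ico 0 δ) 0 :=
      (hline 0).hasDerivWithinAt
    have huc : HasDerivWithinAt (fun t : ℝ => u (z + t • e3)) (D e3) (Ico 0 δ) 0 := by
      have hDu' : HasFDerivWithinAt u D S ((fun t : ℝ => z + t • e3) 0) := by
        show HasFDerivWithinAt u D S (z + (0:ℝ) • e3)
        rw [hℓ0]; exact hDu
      exact hDu'.comp_hasDerivWithinAt 0 hlineW hmaps
    have hz2 : z 2 = -T := hzGa.1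
    have hFc : HasDerivWithinAt (fun t : ℝ => Fm m (z + t • e3))
        (m * T * q3 z ^ (-(3/2):ℝ)) (Ico 0 δ) 0 := by
      have hF : HasFDerivAt (Fm m) ((-(m/2) * q3 z ^ (-(3/2):ℝ)) • Dq3 z)
          ((fun t : ℝ => z + t • e3) 0) := by
        show HasFDerivAt (Fm m) ((-(m/2) * q3 z ^ (-(3/2):ℝ)) • Dq3 z) (z + (0:ℝ) • e3)
        rw [hℓ0]; exact hasFDerivAt_Fm m hq3z.ne'
      have := hF.comp_hasDerivWithinAt 0 hlineW
      have hval : ((-(m/2) * q3 z ^ (-(3/2):ℝ)) • Dq3 z) e3 = m * T * q3 z ^ (-(3/2):ℝ) := by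
        rw [ContinuousLinearMap.smul_apply, e3, Dq3_apply, hz2]
        simp only [smul_eq_mul]
        ring
      rw [hval] at this
      exact this
    have hqc : HasDerivWithinAt (fun t : ℝ => q3 (z + t • e3)) (-(2*T)) (Ico 0 δ) 0 := by
      have hq : HasFDerivAt q3 (Dq3 z) ((fun t : ℝ => z + t • e3) 0) := by
        show HasFDerivAt q3 (Dq3 z) (z + (0:ℝ) • e3)
        rw [hℓ0]; exact hasFDerivAt_q3 z
      have := hq.comp_hasDerivWithinAt 0 hlineW
      have hval : (Dq3 z) e3 = -(2*T) := by
        rw [e3, Dq3_apply, hz2]; ring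
      rw [hval] at this
      exact this
    have hWc : HasDerivWithinAt (fun t : ℝ => W (z + t • e3))
        (D e3 - m * T * q3 z ^ (-(3/2):ℝ) - ε * -(2*T)) (Ico 0 δ) 0 := by
      rw [hW_def]
      exact (huc.sub hFc).sub (hqc.const_mul ε)
    have hd0 : 0 ≤ D e3 - m * T * q3 z ^ (-(3/2):ℝ) - ε * -(2*T) := by
      apply oneSided_nonneg (fun t : ℝ => W (z + t • e3)) hδ0 hWc
      intro t ht
      have h1 : z + t • e3 ∈ C := hSC (hmaps ht)
      simp only [hℓ0]
      exact hzmin h1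
    have hDle := hbdry z hzGa
    rw [← hD_def] at hDle
    -- algebraic conclusion
    set r : ℝ := ‖z‖ with hr_def
    have hr1 : R₁ ≤ r := (hnormC z hzC).1
    have hr2 : r ≤ ρ := (hnormC z hzC).2
    have hr0 : 0 < r := lt_of_lt_of_le hR₁ hr1
    have hq3r : q3 z = r ^ 2 := q3_eq z
    have hpow : q3 z ^ (-(3/2):ℝ) = (r ^ 3)⁻¹ := by
      rw [hq3r, ← Real.rpow_natCast r 2, ← Real.rpow_mul hr0.le]
      rw [show ((2:ℕ):ℝ) * (-(3/2)) = -(3:ℝ) by norm_num]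
      rw [Real.rpow_neg hr0.le, show ((3:ℝ)) = ((3:ℕ):ℝ) by norm_num, Real.rpow_natCast]
    have huz : u z ≤ m / r + ε * r ^ 2 := by
      have := hWval z
      rw [this] at hWz
      linarith
    have hu_r : u z * r ≤ m + ε * r ^ 3 := by
      have h := mul_le_mul_of_nonneg_right huz hr0.le
      calc u z * r ≤ (m / r + ε * r ^ 2) * r := h
        _ = m + ε * r ^ 3 := by field_simp
    have hr3 : (0:ℝ) < r ^ 3 := by positivity
    have h1 : m * T * (r^3)⁻¹ - 2 * ε * T ≤ Λ * u z ^ 3 := by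
      rw [hpow] at hd0
      linarith
    have e1 : m * T - 2 * ε * T * r ^ 3 ≤ Λ * u z ^ 3 * r ^ 3 := by
      have h := mul_le_mul_of_nonneg_right h1 hr3.le
      calc m * T - 2 * ε * T * r ^ 3 = (m * T * (r^3)⁻¹ - 2 * ε * T) * r ^ 3 := by
            field_simp
        _ ≤ Λ * u z ^ 3 * r ^ 3 := h
    have e2 : Λ * u z ^ 3 * r ^ 3 ≤ Λ * (m + ε * r ^ 3) ^ 3 := by
      have h := pow_le_pow_left₀ (mul_nonneg (hpos z hzC).le hr0.le) hu_r 3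
      calc Λ * u z ^ 3 * r ^ 3 = Λ * (u z * r) ^ 3 := by ring
        _ ≤ Λ * (m + ε * r ^ 3) ^ 3 := mul_le_mul_of_nonneg_left h hΛ.le
    have hrρ3 : r ^ 3 ≤ ρ ^ 3 := pow_le_pow_left₀ hr0.le hr2 3
    have e3' : Λ * (m + ε * r ^ 3) ^ 3 ≤ Λ * (m + ε * ρ ^ 3) ^ 3 := by
      have h2 : m + ε * r ^ 3 ≤ m + ε * ρ ^ 3 := by nlinarith
      exact mul_le_mul_of_nonneg_left (pow_le_pow_left₀ (by positivity) h2 3) hΛ.le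
    have e4 : 2 * ε * T * r ^ 3 ≤ 2 * ε * T * ρ ^ 3 :=
      mul_le_mul_of_nonneg_left hrρ3 (by positivity)
    linarith
end
end
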